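/- (Proposition 1: VCG-nearest is not non-decreasing.) Let x* be the allocation giving {1} to bidder 1, {2} to bidder 2, nothing to bidder 3. For both β = 5 and β = 7, x* is the unique efficient allocation. The VCG-nearest payment of bidder 2 equals 3 when β = 5 and equals 5/2 when β = 7. Hence, although bidder 2's bid with β = 7 is coordinatewise at least his bid with β = 5 and the efficient allocation is unchanged, his VCG-nearest payment strictly decreases; therefore the VCG-nearest payment rule is not non-decreasing. -/

import Mathlib

open Finset

/-- An allocation assigns to each of the 3 bidders a subset of the 2 goods,
pairwise disjoint. -/
def IsAlloc (x : Fin 3 → Finset (Fin 2)) : Prop :=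
  ∀ i j, i ≠ j → Disjoint (x i) (x j)

/-- An allocation is efficient if it maximizes reported social welfare. -/
def Efficient (b : Fin 3 → Finset (Fin 2) → ℝ) (x : Fin 3 → Finset (Fin 2)) : Prop :=
  IsAlloc x ∧ ∀ y, IsAlloc y → ∑ i, b i (y i) ≤ ∑ i, b i (x i)

/-- The VCG payment of bidder `i` at allocation `x`:
`max_{x'} ∑_{j≠i} b_j(x'_j) − ∑_{j≠i} b_j(x_j)`. -/
noncomputable def vcgPayment (b : Fin 3 → Finset (Fin 2) → ℝ)
    (x : Fin 3 → Finset (Fin 2)) (i : Fin 3) : ℝ :=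
  sSup {w : ℝ | ∃ y, IsAlloc y ∧ w = ∑ j ∈ Finset.univ.erase i, b j (y j)} -
    ∑ j ∈ Finset.univ.erase i, b j (x j)

/-- The core w.r.t. bids `b` and allocation `x`. -/
noncomputable def AuctionCore (b : Fin 3 → Finset (Fin 2) → ℝ)
    (x : Fin 3 → Finset (Fin 2)) : Set (Fin 3 → ℝ) :=
  {p | (∀ i, 0 ≤ p i ∧ p i ≤ b i (x i)) ∧
    ∀ L : Finset (Fin 3),
      sSup {w : ℝ | ∃ y, IsAlloc y ∧ w = ∑ i ∈ L, b i (y i)} - ∑ i ∈ L, b i (x i) ≤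
        ∑ i ∈ Lᶜ, p i}

/-- The minimum-revenue core: the core points minimizing total payment. -/
noncomputable def MinRevCore (b : Fin 3 → Finset (Fin 2) → ℝ)
    (x : Fin 3 → Finset (Fin 2)) : Set (Fin 3 → ℝ) :=
  {p ∈ AuctionCore b x | ∀ q ∈ AuctionCore b x, ∑ i, p i ≤ ∑ i, q i}

/-- `p` is a VCG-nearest payment vector: a point of the minimum-revenue core of
minimum Euclidean distance to the VCG payment vector. -/
noncomputable def IsVCGNearest (b : Fin 3 → Finset (Fin 2) → ℝ)
    (x : Fin 3 → Finset (Fin 2)) (p : Fin 3 → ℝ) : Prop :=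
  p ∈ MinRevCore b x ∧
    ∀ p' ∈ MinRevCore b x,
      ∑ i, (p i - vcgPayment b x i) ^ 2 ≤ ∑ i, (p' i - vcgPayment b x i) ^ 2

/-- A payment rule is non-decreasing if, whenever one bidder weakly raises his bid
on every bundle while all other bids are unchanged and an allocation `x` is
efficient in both cases, that bidder's payment at `x` does not decrease. -/
def NonDecreasing
    (pr : (Fin 3 → Finset (Fin 2) → ℝ) → (Fin 3 → Finset (Fin 2)) → Fin 3 → ℝ) : Prop :=
  ∀ b b' : Fin 3 → Finset (Fin 2) → ℝ, ∀ i : Fin 3,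
    (∀ j, j ≠ i → b' j = b j) → (∀ K, b i K ≤ b' i K) →
      ∀ x, Efficient b x → Efficient b' x → pr b x i ≤ pr b' x i

/-- The bids of Table 1 (goods 1,2 are encoded as 0,1). -/
def bids (β : ℝ) : Fin 3 → Finset (Fin 2) → ℝ := fun i K =>
  if i = 0 then (if K = {0} then 4 else 0)
  else if i = 1 then (if K = {1} then 4 else if K = {0, 1} then β else 0)
  else (if K = {0} then 2 else if K = {1} then 2 else if K = {0, 1} then 6 else 0)

/-- The allocation giving good 1 to bidder 1, good 2 to bidder 2 and nothing to bidder 3. -/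
def xstar : Fin 3 → Finset (Fin 2) := fun i =>
  if i = 0 then {0} else if i = 1 then {1} else ∅

-- ===== auxiliary lemmas =====

lemma allK : ∀ K : Finset (Fin 2), K = ∅ ∨ K = {0} ∨ K = {1} ∨ K = {0,1} := by decide

set_option maxHeartbeats 1000000 in
lemma alloc_cases (y : Fin 3 → Finset (Fin 2)) (h : IsAlloc y) :
    (y 0 = ∅ ∧ y 1 = ∅ ∧ y 2 = ∅) ∨ (y 0 = ∅ ∧ y 1 = ∅ ∧ y 2 = {0}) ∨
    (y 0 = ∅ ∧ y 1 = ∅ ∧ y 2 = {1}) ∨ (y 0 = ∅ ∧ y 1 = ∅ ∧ y 2 = {0,1}) ∨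
    (y 0 = ∅ ∧ y 1 = {0} ∧ y 2 = ∅) ∨ (y 0 = ∅ ∧ y 1 = {0} ∧ y 2 = {1}) ∨
    (y 0 = ∅ ∧ y 1 = {1} ∧ y 2 = ∅) ∨ (y 0 = ∅ ∧ y 1 = {1} ∧ y 2 = {0}) ∨
    (y 0 = ∅ ∧ y 1 = {0,1} ∧ y 2 = ∅) ∨
    (y 0 = {0} ∧ y 1 = ∅ ∧ y 2 = ∅) ∨ (y 0 = {0} ∧ y 1 = ∅ ∧ y 2 = {1}) ∨
    (y 0 = {0} ∧ y 1 = {1} ∧ y 2 = ∅) ∨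
    (y 0 = {1} ∧ y 1 = ∅ ∧ y 2 = ∅) ∨ (y 0 = {1} ∧ y 1 = ∅ ∧ y 2 = {0}) ∨
    (y 0 = {1} ∧ y 1 = {0} ∧ y 2 = ∅) ∨
    (y 0 = {0,1} ∧ y 1 = ∅ ∧ y 2 = ∅) := by
  have h01 := h 0 1 (by decide)
  have h02 := h 0 2 (by decide)
  have h12 := h 1 2 (by decide)
  rcases allK (y 0) with h0|h0|h0|h0 <;> rcases allK (y 1) with h1|h1|h1|h1 <;>
    rcases allK (y 2) with h2|h2|h2|h2 <;>
    simp_all (config := { decide := true })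

-- sum expansion helpers
lemma sum3_01 (f : Fin 3 → ℝ) : ∑ i ∈ ({0,1} : Finset (Fin 3)), f i = f 0 + f 1 :=
  Finset.sum_pair (by decide)
lemma sum3_02 (f : Fin 3 → ℝ) : ∑ i ∈ ({0,2} : Finset (Fin 3)), f i = f 0 + f 2 :=
  Finset.sum_pair (by decide)
lemma sum3_12 (f : Fin 3 → ℝ) : ∑ i ∈ ({1,2} : Finset (Fin 3)), f i = f 1 + f 2 :=
  Finset.sum_pair (by decide)
lemma sum3_012 (f : Fin 3 → ℝ) :
    ∑ i ∈ ({0,1,2} : Finset (Fin 3)), f i = f 0 + f 1 + f 2 := by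
  rw [show ({0,1,2} : Finset (Fin 3)) = Finset.univ by decide]
  exact Fin.sum_univ_three f

lemma sup_spec (b : Fin 3 → Finset (Fin 2) → ℝ) (S : Finset (Fin 3)) (c : ℝ)
    (y₀ : Fin 3 → Finset (Fin 2)) (h₀ : IsAlloc y₀) (hc : ∑ i ∈ S, b i (y₀ i) = c)
    (hub : ∀ y, IsAlloc y → ∑ i ∈ S, b i (y i) ≤ c) :
    sSup {w : ℝ | ∃ y, IsAlloc y ∧ w = ∑ i ∈ S, b i (y i)} = c := by
  apply IsGreatest.csSup_eq
  exact ⟨⟨y₀, h₀, hc.symm⟩, by rintro w ⟨y, hy, rfl⟩; exact hub y hy⟩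

lemma isAlloc_xstar : IsAlloc xstar := by unfold IsAlloc xstar; decide
lemma isAlloc_empty : IsAlloc (fun _ => (∅ : Finset (Fin 2))) := by unfold IsAlloc; decide
lemma isAlloc_B : IsAlloc ![{0}, ∅, {1}] := by unfold IsAlloc; decide
lemma isAlloc_C : IsAlloc ![∅, ∅, {0,1}] := by unfold IsAlloc; decide
lemma isAlloc_D : IsAlloc ![∅, {0,1}, ∅] := by unfold IsAlloc; decide
lemma isAlloc_E : IsAlloc ![∅, {1}, {0}] := by unfold IsAlloc; decide
lemma allL : ∀ L : Finset (Fin 3), L = ∅ ∨ L = {0} ∨ L = {1} ∨ L = {2} ∨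
    L = {0,1} ∨ L = {0,2} ∨ L = {1,2} ∨ L = {0,1,2} := by decide

section sups
variable {β : ℝ}

lemma hubU (h8 : β ≤ 8) : ∀ y, IsAlloc y → ∑ i, bids β i (y i) ≤ 8 := by
  intro y hy
  rw [Fin.sum_univ_three]
  rcases alloc_cases y hy with ⟨h0,h1,h2⟩|⟨h0,h1,h2⟩|⟨h0,h1,h2⟩|⟨h0,h1,h2⟩|⟨h0,h1,h2⟩|⟨h0,h1,h2⟩|⟨h0,h1,h2⟩|⟨h0,h1,h2⟩|⟨h0,h1,h2⟩|⟨h0,h1,h2⟩|⟨h0,h1,h2⟩|⟨h0,h1,h2⟩|⟨h0,h1,h2⟩|⟨h0,h1,h2⟩|⟨h0,h1,h2⟩|⟨h0,h1,h2⟩ <;>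
    rw [h0, h1, h2] <;>
    simp (config := { decide := true }) only [bids] <;> norm_num <;> linarith

lemma supE : sSup {w : ℝ | ∃ y, IsAlloc y ∧ w = ∑ i ∈ (∅ : Finset (Fin 3)), bids β i (y i)} = 0 := by
  apply sup_spec _ _ _ _ isAlloc_xstar (by simp)
  intro y hy; simp

lemma sup0 : sSup {w : ℝ | ∃ y, IsAlloc y ∧ w = ∑ i ∈ ({0} : Finset (Fin 3)), bids β i (y i)} = 4 := by
  apply sup_spec _ _ _ xstar isAlloc_xstar
    (by rw [Finset.sum_singleton]; simp (config := { decide := true }) [bids, xstar])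
  intro y hy
  rw [Finset.sum_singleton]
  rcases alloc_cases y hy with ⟨h0,h1,h2⟩|⟨h0,h1,h2⟩|⟨h0,h1,h2⟩|⟨h0,h1,h2⟩|⟨h0,h1,h2⟩|⟨h0,h1,h2⟩|⟨h0,h1,h2⟩|⟨h0,h1,h2⟩|⟨h0,h1,h2⟩|⟨h0,h1,h2⟩|⟨h0,h1,h2⟩|⟨h0,h1,h2⟩|⟨h0,h1,h2⟩|⟨h0,h1,h2⟩|⟨h0,h1,h2⟩|⟨h0,h1,h2⟩ <;>
    rw [h0] <;>
    simp (config := { decide := true }) only [bids] <;> norm_num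

lemma sup1 (h4 : (4:ℝ) ≤ β) :
    sSup {w : ℝ | ∃ y, IsAlloc y ∧ w = ∑ i ∈ ({1} : Finset (Fin 3)), bids β i (y i)} = β := by
  apply sup_spec _ _ _ ![∅, {0,1}, ∅] isAlloc_D
    (by rw [Finset.sum_singleton]; simp (config := { decide := true }) [bids])
  intro y hy
  rw [Finset.sum_singleton]
  rcases alloc_cases y hy with ⟨h0,h1,h2⟩|⟨h0,h1,h2⟩|⟨h0,h1,h2⟩|⟨h0,h1,h2⟩|⟨h0,h1,h2⟩|⟨h0,h1,h2⟩|⟨h0,h1,h2⟩|⟨h0,h1,h2⟩|⟨h0,h1,h2⟩|⟨h0,h1,h2⟩|⟨h0,h1,h2⟩|⟨h0,h1,h2⟩|⟨h0,h1,h2⟩|⟨h0,h1,h2⟩|⟨h0,h1,h2⟩|⟨h0,h1,h2⟩ <;>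
    rw [h1] <;>
    simp (config := { decide := true }) only [bids] <;> norm_num <;> linarith

lemma sup2 : sSup {w : ℝ | ∃ y, IsAlloc y ∧ w = ∑ i ∈ ({2} : Finset (Fin 3)), bids β i (y i)} = 6 := by
  apply sup_spec _ _ _ ![∅, ∅, {0,1}] isAlloc_C
    (by rw [Finset.sum_singleton]; simp (config := { decide := true }) [bids])
  intro y hy
  rw [Finset.sum_singleton]
  rcases alloc_cases y hy with ⟨h0,h1,h2⟩|⟨h0,h1,h2⟩|⟨h0,h1,h2⟩|⟨h0,h1,h2⟩|⟨h0,h1,h2⟩|⟨h0,h1,h2⟩|⟨h0,h1,h2⟩|⟨h0,h1,h2⟩|⟨h0,h1,h2⟩|⟨h0,h1,h2⟩|⟨h0,h1,h2⟩|⟨h0,h1,h2⟩|⟨h0,h1,h2⟩|⟨h0,h1,h2⟩|⟨h0,h1,h2⟩|⟨h0,h1,h2⟩ <;>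
    rw [h2] <;>
    simp (config := { decide := true }) only [bids] <;> norm_num

lemma sup01 (h8 : β ≤ 8) :
    sSup {w : ℝ | ∃ y, IsAlloc y ∧ w = ∑ i ∈ ({0,1} : Finset (Fin 3)), bids β i (y i)} = 8 := by
  apply sup_spec _ _ _ xstar isAlloc_xstar
    (by rw [sum3_01]; simp (config := { decide := true }) [bids, xstar]; try norm_num)
  intro y hy
  rw [sum3_01]
  rcases alloc_cases y hy with ⟨h0,h1,h2⟩|⟨h0,h1,h2⟩|⟨h0,h1,h2⟩|⟨h0,h1,h2⟩|⟨h0,h1,h2⟩|⟨h0,h1,h2⟩|⟨h0,h1,h2⟩|⟨h0,h1,h2⟩|⟨h0,h1,h2⟩|⟨h0,h1,h2⟩|⟨h0,h1,h2⟩|⟨h0,h1,h2⟩|⟨h0,h1,h2⟩|⟨h0,h1,h2⟩|⟨h0,h1,h2⟩|⟨h0,h1,h2⟩ <;>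
    rw [h0, h1] <;>
    simp (config := { decide := true }) only [bids] <;> norm_num <;> linarith

lemma sup02 : sSup {w : ℝ | ∃ y, IsAlloc y ∧ w = ∑ i ∈ ({0,2} : Finset (Fin 3)), bids β i (y i)} = 6 := by
  apply sup_spec _ _ _ ![{0}, ∅, {1}] isAlloc_B
    (by rw [sum3_02]; simp (config := { decide := true }) [bids]; try norm_num)
  intro y hy
  rw [sum3_02]
  rcases alloc_cases y hy with ⟨h0,h1,h2⟩|⟨h0,h1,h2⟩|⟨h0,h1,h2⟩|⟨h0,h1,h2⟩|⟨h0,h1,h2⟩|⟨h0,h1,h2⟩|⟨h0,h1,h2⟩|⟨h0,h1,h2⟩|⟨h0,h1,h2⟩|⟨h0,h1,h2⟩|⟨h0,h1,h2⟩|⟨h0,h1,h2⟩|⟨h0,h1,h2⟩|⟨h0,h1,h2⟩|⟨h0,h1,h2⟩|⟨h0,h1,h2⟩ <;>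
    rw [h0, h2] <;>
    simp (config := { decide := true }) only [bids] <;> norm_num

lemma sup012 (h8 : β ≤ 8) :
    sSup {w : ℝ | ∃ y, IsAlloc y ∧ w = ∑ i ∈ ({0,1,2} : Finset (Fin 3)), bids β i (y i)} = 8 := by
  apply sup_spec _ _ _ xstar isAlloc_xstar
    (by rw [sum3_012]; simp (config := { decide := true }) [bids, xstar]; try norm_num)
  intro y hy
  rw [sum3_012]
  exact (Fin.sum_univ_three (fun i => bids β i (y i))) ▸ hubU h8 y hy

end sups

lemma sup12_5 : sSup {w : ℝ | ∃ y, IsAlloc y ∧ w = ∑ i ∈ ({1,2} : Finset (Fin 3)), bids 5 i (y i)} = 6 := by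
  apply sup_spec _ _ _ ![∅, {1}, {0}] isAlloc_E
    (by rw [sum3_12]; simp (config := { decide := true }) [bids]; try norm_num)
  intro y hy
  rw [sum3_12]
  rcases alloc_cases y hy with ⟨h0,h1,h2⟩|⟨h0,h1,h2⟩|⟨h0,h1,h2⟩|⟨h0,h1,h2⟩|⟨h0,h1,h2⟩|⟨h0,h1,h2⟩|⟨h0,h1,h2⟩|⟨h0,h1,h2⟩|⟨h0,h1,h2⟩|⟨h0,h1,h2⟩|⟨h0,h1,h2⟩|⟨h0,h1,h2⟩|⟨h0,h1,h2⟩|⟨h0,h1,h2⟩|⟨h0,h1,h2⟩|⟨h0,h1,h2⟩ <;>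
    rw [h1, h2] <;>
    simp (config := { decide := true }) only [bids] <;> norm_num

lemma sup12_7 : sSup {w : ℝ | ∃ y, IsAlloc y ∧ w = ∑ i ∈ ({1,2} : Finset (Fin 3)), bids 7 i (y i)} = 7 := by
  apply sup_spec _ _ _ ![∅, {0,1}, ∅] isAlloc_D
    (by rw [sum3_12]; simp (config := { decide := true }) [bids]; try norm_num)
  intro y hy
  rw [sum3_12]
  rcases alloc_cases y hy with ⟨h0,h1,h2⟩|⟨h0,h1,h2⟩|⟨h0,h1,h2⟩|⟨h0,h1,h2⟩|⟨h0,h1,h2⟩|⟨h0,h1,h2⟩|⟨h0,h1,h2⟩|⟨h0,h1,h2⟩|⟨h0,h1,h2⟩|⟨h0,h1,h2⟩|⟨h0,h1,h2⟩|⟨h0,h1,h2⟩|⟨h0,h1,h2⟩|⟨h0,h1,h2⟩|⟨h0,h1,h2⟩|⟨h0,h1,h2⟩ <;>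
    rw [h1, h2] <;>
    simp (config := { decide := true }) only [bids] <;> norm_num
section eff
variable {β : ℝ}

lemma sum_xstar : ∑ i, bids β i (xstar i) = 8 := by
  rw [Fin.sum_univ_three]
  simp (config := { decide := true }) [bids, xstar]
  norm_num

lemma eff_xstar (h8 : β ≤ 8) : Efficient (bids β) xstar :=
  ⟨isAlloc_xstar, fun y hy => by rw [sum_xstar]; exact hubU h8 y hy⟩

lemma uniq_eff (h8 : β < 8) : ∀ x, Efficient (bids β) x → x = xstar := by
  intro x hx
  have hsum : ∑ i, bids β i (x i) = 8 :=
    le_antisymm (hubU (le_of_lt h8) x hx.1)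
      (by rw [← @sum_xstar β]; exact hx.2 xstar isAlloc_xstar)
  rw [Fin.sum_univ_three] at hsum
  rcases alloc_cases x hx.1 with ⟨h0,h1,h2⟩|⟨h0,h1,h2⟩|⟨h0,h1,h2⟩|⟨h0,h1,h2⟩|⟨h0,h1,h2⟩|⟨h0,h1,h2⟩|⟨h0,h1,h2⟩|⟨h0,h1,h2⟩|⟨h0,h1,h2⟩|⟨h0,h1,h2⟩|⟨h0,h1,h2⟩|⟨h0,h1,h2⟩|⟨h0,h1,h2⟩|⟨h0,h1,h2⟩|⟨h0,h1,h2⟩|⟨h0,h1,h2⟩ <;>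
    rw [h0, h1, h2] at hsum <;>
    first
      | (funext i; fin_cases i <;>
          (simp (config := { decide := true }) [xstar, h0, h1, h2]; done))
      | (exfalso; simp (config := { decide := true }) [bids] at hsum; try linarith)

end eff
-- complement computations
lemma cE : (∅ : Finset (Fin 3))ᶜ = {0,1,2} := by decide
lemma c0 : ({0} : Finset (Fin 3))ᶜ = {1,2} := by decide
lemma c1 : ({1} : Finset (Fin 3))ᶜ = {0,2} := by decide
lemma c2 : ({2} : Finset (Fin 3))ᶜ = {0,1} := by decide
lemma c01 : ({0,1} : Finset (Fin 3))ᶜ = {2} := by decide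
lemma c02 : ({0,2} : Finset (Fin 3))ᶜ = {1} := by decide
lemma c12 : ({1,2} : Finset (Fin 3))ᶜ = {0} := by decide
lemma c012 : ({0,1,2} : Finset (Fin 3))ᶜ = ∅ := by decide

-- values of bids at xstar
lemma bx0 {β : ℝ} : bids β 0 (xstar 0) = 4 := by
  simp (config := { decide := true }) [bids, xstar]
lemma bx1 {β : ℝ} : bids β 1 (xstar 1) = 4 := by
  simp (config := { decide := true }) [bids, xstar]
lemma bx2 {β : ℝ} : bids β 2 (xstar 2) = 0 := by
  simp (config := { decide := true }) [bids, xstar]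

lemma mem5 : ![3,3,0] ∈ AuctionCore (bids 5) xstar := by
  constructor
  · intro i
    fin_cases i <;> simp (config := { decide := true }) [bids, xstar] <;> norm_num
  · intro L
    rcases allL L with rfl|rfl|rfl|rfl|rfl|rfl|rfl|rfl
    · rw [supE, cE, sum3_012, Finset.sum_empty]; norm_num [Matrix.cons_val_two, Matrix.tail_cons, Matrix.head_cons]
    · rw [sup0, c0, sum3_12, Finset.sum_singleton, bx0]; norm_num [Matrix.cons_val_two, Matrix.tail_cons, Matrix.head_cons]
    · rw [sup1 (by norm_num), c1, sum3_02, Finset.sum_singleton, bx1]; norm_num [Matrix.cons_val_two, Matrix.tail_cons, Matrix.head_cons]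
    · rw [sup2, c2, sum3_01, Finset.sum_singleton, bx2]; norm_num
    · rw [sup01 (by norm_num), c01, sum3_01, Finset.sum_singleton, bx0, bx1]; norm_num [Matrix.cons_val_two, Matrix.tail_cons, Matrix.head_cons]
    · rw [sup02, c02, sum3_02, Finset.sum_singleton, bx0, bx2]; norm_num
    · rw [sup12_5, c12, sum3_12, Finset.sum_singleton, bx1, bx2]; norm_num
    · rw [sup012 (by norm_num), c012, sum3_012, Finset.sum_empty, bx0, bx1, bx2]; norm_num

lemma mem7 : ![7/2, 5/2, 0] ∈ AuctionCore (bids 7) xstar := by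
  constructor
  · intro i
    fin_cases i <;> simp (config := { decide := true }) [bids, xstar] <;> norm_num
  · intro L
    rcases allL L with rfl|rfl|rfl|rfl|rfl|rfl|rfl|rfl
    · rw [supE, cE, sum3_012, Finset.sum_empty]; norm_num [Matrix.cons_val_two, Matrix.tail_cons, Matrix.head_cons]
    · rw [sup0, c0, sum3_12, Finset.sum_singleton, bx0]; norm_num [Matrix.cons_val_two, Matrix.tail_cons, Matrix.head_cons]
    · rw [sup1 (by norm_num), c1, sum3_02, Finset.sum_singleton, bx1]; norm_num [Matrix.cons_val_two, Matrix.tail_cons, Matrix.head_cons]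
    · rw [sup2, c2, sum3_01, Finset.sum_singleton, bx2]; norm_num
    · rw [sup01 (by norm_num), c01, sum3_01, Finset.sum_singleton, bx0, bx1]; norm_num [Matrix.cons_val_two, Matrix.tail_cons, Matrix.head_cons]
    · rw [sup02, c02, sum3_02, Finset.sum_singleton, bx0, bx2]; norm_num
    · rw [sup12_7, c12, sum3_12, Finset.sum_singleton, bx1, bx2]; norm_num
    · rw [sup012 (by norm_num), c012, sum3_012, Finset.sum_empty, bx0, bx1, bx2]; norm_num

lemma core_facts5 (q : Fin 3 → ℝ) (hq : q ∈ AuctionCore (bids 5) xstar) :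
    0 ≤ q 0 ∧ 0 ≤ q 1 ∧ q 2 = 0 ∧ q 0 ≤ 4 ∧ q 1 ≤ 4 ∧ 6 ≤ q 0 + q 1 ∧ 2 ≤ q 0 := by
  obtain ⟨hind, hcoal⟩ := hq
  have h0 := hind 0; have h1 := hind 1; have h2 := hind 2
  rw [bx0] at h0; rw [bx1] at h1; rw [bx2] at h2
  have hA := hcoal {2}
  rw [sup2, c2, sum3_01, Finset.sum_singleton, bx2] at hA
  have hB := hcoal {1,2}
  rw [sup12_5, c12, sum3_12, Finset.sum_singleton, bx1, bx2] at hB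
  refine ⟨h0.1, h1.1, le_antisymm h2.2 h2.1, h0.2, h1.2, by linarith, by linarith⟩

lemma core_facts7 (q : Fin 3 → ℝ) (hq : q ∈ AuctionCore (bids 7) xstar) :
    0 ≤ q 0 ∧ 0 ≤ q 1 ∧ q 2 = 0 ∧ q 0 ≤ 4 ∧ q 1 ≤ 4 ∧ 6 ≤ q 0 + q 1 ∧ 3 ≤ q 0 := by
  obtain ⟨hind, hcoal⟩ := hq
  have h0 := hind 0; have h1 := hind 1; have h2 := hind 2
  rw [bx0] at h0; rw [bx1] at h1; rw [bx2] at h2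
  have hA := hcoal {2}
  rw [sup2, c2, sum3_01, Finset.sum_singleton, bx2] at hA
  have hB := hcoal {1,2}
  rw [sup12_7, c12, sum3_12, Finset.sum_singleton, bx1, bx2] at hB
  refine ⟨h0.1, h1.1, le_antisymm h2.2 h2.1, h0.2, h1.2, by linarith, by linarith⟩

lemma minrev5 : ![3,3,0] ∈ MinRevCore (bids 5) xstar := by
  refine ⟨mem5, fun q hq => ?_⟩
  obtain ⟨-, -, h2, -, -, hs, -⟩ := core_facts5 q hq
  rw [Fin.sum_univ_three, Fin.sum_univ_three]
  simp only [Matrix.cons_val_zero, Matrix.cons_val_one, Matrix.head_cons,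
    Matrix.cons_val_two, Matrix.tail_cons]
  linarith

lemma minrev7 : ![7/2, 5/2, 0] ∈ MinRevCore (bids 7) xstar := by
  refine ⟨mem7, fun q hq => ?_⟩
  obtain ⟨-, -, h2, -, -, hs, -⟩ := core_facts7 q hq
  rw [Fin.sum_univ_three, Fin.sum_univ_three]
  simp only [Matrix.cons_val_zero, Matrix.cons_val_one, Matrix.head_cons,
    Matrix.cons_val_two, Matrix.tail_cons]
  linarith

lemma minrev_facts5 (q : Fin 3 → ℝ) (hq : q ∈ MinRevCore (bids 5) xstar) :
    q 0 + q 1 = 6 ∧ q 2 = 0 ∧ 2 ≤ q 0 ∧ q 0 ≤ 4 := by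
  obtain ⟨-, -, h2, h04, -, hs, h20⟩ := core_facts5 q hq.1
  have hle := hq.2 ![3,3,0] mem5
  rw [Fin.sum_univ_three, Fin.sum_univ_three] at hle
  simp only [Matrix.cons_val_zero, Matrix.cons_val_one, Matrix.head_cons,
    Matrix.cons_val_two, Matrix.tail_cons] at hle
  exact ⟨by linarith, h2, h20, h04⟩

lemma minrev_facts7 (q : Fin 3 → ℝ) (hq : q ∈ MinRevCore (bids 7) xstar) :
    q 0 + q 1 = 6 ∧ q 2 = 0 ∧ 3 ≤ q 0 ∧ q 0 ≤ 4 := by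
  obtain ⟨-, -, h2, h04, -, hs, h30⟩ := core_facts7 q hq.1
  have hle := hq.2 ![7/2, 5/2, 0] mem7
  rw [Fin.sum_univ_three, Fin.sum_univ_three] at hle
  simp only [Matrix.cons_val_zero, Matrix.cons_val_one, Matrix.head_cons,
    Matrix.cons_val_two, Matrix.tail_cons] at hle
  exact ⟨by linarith, h2, h30, h04⟩

-- VCG payments
lemma vcg5_0 : vcgPayment (bids 5) xstar 0 = 2 := by
  unfold vcgPayment
  rw [show Finset.univ.erase (0 : Fin 3) = {1,2} from by decide,
    sup12_5, sum3_12, bx1, bx2]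
  norm_num

lemma vcg5_1 : vcgPayment (bids 5) xstar 1 = 2 := by
  unfold vcgPayment
  rw [show Finset.univ.erase (1 : Fin 3) = {0,2} from by decide,
    sup02, sum3_02, bx0, bx2]
  norm_num

lemma vcg5_2 : vcgPayment (bids 5) xstar 2 = 0 := by
  unfold vcgPayment
  rw [show Finset.univ.erase (2 : Fin 3) = {0,1} from by decide,
    sup01 (by norm_num), sum3_01, bx0, bx1]
  norm_num

lemma vcg7_0 : vcgPayment (bids 7) xstar 0 = 3 := by
  unfold vcgPayment
  rw [show Finset.univ.erase (0 : Fin 3) = {1,2} from by decide,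
    sup12_7, sum3_12, bx1, bx2]
  norm_num

lemma vcg7_1 : vcgPayment (bids 7) xstar 1 = 2 := by
  unfold vcgPayment
  rw [show Finset.univ.erase (1 : Fin 3) = {0,2} from by decide,
    sup02, sum3_02, bx0, bx2]
  norm_num

lemma vcg7_2 : vcgPayment (bids 7) xstar 2 = 0 := by
  unfold vcgPayment
  rw [show Finset.univ.erase (2 : Fin 3) = {0,1} from by decide,
    sup01 (by norm_num), sum3_01, bx0, bx1]
  norm_num
lemma nearest5 : IsVCGNearest (bids 5) xstar ![3,3,0] := by
  refine ⟨minrev5, fun p' hp' => ?_⟩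
  obtain ⟨hs, h2, h20, h04⟩ := minrev_facts5 p' hp'
  rw [Fin.sum_univ_three, Fin.sum_univ_three, vcg5_0, vcg5_1, vcg5_2]
  simp only [Matrix.cons_val_zero, Matrix.cons_val_one, Matrix.head_cons,
    Matrix.cons_val_two, Matrix.tail_cons]
  nlinarith [sq_nonneg (p' 0 - 3)]

lemma nearest5_uniq (p' : Fin 3 → ℝ) (h : IsVCGNearest (bids 5) xstar p') :
    p' = ![3,3,0] := by
  obtain ⟨hs, h2, h20, h04⟩ := minrev_facts5 p' h.1
  have hle := h.2 ![3,3,0] minrev5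
  rw [Fin.sum_univ_three, Fin.sum_univ_three, vcg5_0, vcg5_1, vcg5_2] at hle
  simp only [Matrix.cons_val_zero, Matrix.cons_val_one, Matrix.head_cons,
    Matrix.cons_val_two, Matrix.tail_cons] at hle
  have hsq : (p' 0 - 3) ^ 2 ≤ 0 := by nlinarith
  have h03 : p' 0 = 3 := by nlinarith [sq_nonneg (p' 0 - 3)]
  funext i
  fin_cases i <;> simp <;> linarith

lemma nearest7 : IsVCGNearest (bids 7) xstar ![7/2, 5/2, 0] := by
  refine ⟨minrev7, fun p' hp' => ?_⟩
  obtain ⟨hs, h2, h30, h04⟩ := minrev_facts7 p' hp'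
  rw [Fin.sum_univ_three, Fin.sum_univ_three, vcg7_0, vcg7_1, vcg7_2]
  simp only [Matrix.cons_val_zero, Matrix.cons_val_one, Matrix.head_cons,
    Matrix.cons_val_two, Matrix.tail_cons]
  nlinarith [sq_nonneg (p' 0 - 7/2)]

lemma nearest7_uniq (p' : Fin 3 → ℝ) (h : IsVCGNearest (bids 7) xstar p') :
    p' = ![7/2, 5/2, 0] := by
  obtain ⟨hs, h2, h30, h04⟩ := minrev_facts7 p' h.1
  have hle := h.2 ![7/2, 5/2, 0] minrev7
  rw [Fin.sum_univ_three, Fin.sum_univ_three, vcg7_0, vcg7_1, vcg7_2] at hle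
  simp only [Matrix.cons_val_zero, Matrix.cons_val_one, Matrix.head_cons,
    Matrix.cons_val_two, Matrix.tail_cons] at hle
  have hsq : (p' 0 - 7/2) ^ 2 ≤ 0 := by nlinarith
  have h03 : p' 0 = 7/2 := by nlinarith [sq_nonneg (p' 0 - 7/2)]
  funext i
  fin_cases i <;> simp <;> linarith

lemma bids_eq_of_ne : ∀ j, j ≠ (1 : Fin 3) → bids 7 j = bids 5 j := by
  intro j hj
  fin_cases j
  · rfl
  · exact absurd rfl hj
  · rfl

lemma bids_mono : ∀ K, bids 5 1 K ≤ bids 7 1 K := by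
  intro K
  rcases allK K with rfl|rfl|rfl|rfl <;>
    simp (config := { decide := true }) [bids] <;> norm_num
/-- Proposition 1: VCG-nearest is not non-decreasing. For both β = 5 and β = 7,
`xstar` is the unique efficient allocation; the (unique) VCG-nearest payment of
bidder 2 is 3 for β = 5 and 5/2 for β = 7; bidder 2's bid with β = 7 dominates
his bid with β = 5 coordinatewise; 5/2 < 3; hence no payment rule selecting
VCG-nearest payments can be non-decreasing. -/
theorem stmt_4 :
    (Efficient (bids 5) xstar ∧ ∀ x, Efficient (bids 5) x → x = xstar) ∧
    (Efficient (bids 7) xstar ∧ ∀ x, Efficient (bids 7) x → x = xstar) ∧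
    (∃ p, IsVCGNearest (bids 5) xstar p ∧ (∀ p', IsVCGNearest (bids 5) xstar p' → p' = p) ∧
      p 1 = 3) ∧
    (∃ p, IsVCGNearest (bids 7) xstar p ∧ (∀ p', IsVCGNearest (bids 7) xstar p' → p' = p) ∧
      p 1 = 5 / 2) ∧
    (∀ j, j ≠ (1 : Fin 3) → bids 7 j = bids 5 j) ∧
    (∀ K, bids 5 1 K ≤ bids 7 1 K) ∧
    ((5 / 2 : ℝ) < 3) ∧
    (∀ pr : (Fin 3 → Finset (Fin 2) → ℝ) → (Fin 3 → Finset (Fin 2)) → Fin 3 → ℝ,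
      (∀ b x, Efficient b x → IsVCGNearest b x (pr b x)) → ¬ NonDecreasing pr) := by

  have e5 : Efficient (bids 5) xstar := eff_xstar (by norm_num)
  have e7 : Efficient (bids 7) xstar := eff_xstar (by norm_num)
  refine ⟨⟨e5, uniq_eff (by norm_num)⟩, ⟨e7, uniq_eff (by norm_num)⟩,
    ⟨![3,3,0], nearest5, nearest5_uniq, by norm_num⟩,
    ⟨![7/2,5/2,0], nearest7, nearest7_uniq, by norm_num⟩,
    bids_eq_of_ne, bids_mono, by norm_num, ?_⟩
  intro pr hsel hnd
  have h5 : pr (bids 5) xstar = ![3,3,0] := nearest5_uniq _ (hsel _ _ e5)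
  have h7 : pr (bids 7) xstar = ![7/2,5/2,0] := nearest7_uniq _ (hsel _ _ e7)
  have hmono := hnd (bids 5) (bids 7) 1 bids_eq_of_ne bids_mono xstar e5 e7
  rw [h5, h7] at hmono
  norm_num at hmono
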